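/- Let n ≥ 1 and p ≥ 1 be integers and set m = min{n, p−1}. Let a ∈ ℂ^p be nonzero, let ξ₁, …, ξₙ ∈ ℂ^p, and define H_{kl} := ⟨ξ_k, ξ_l⟩/‖a‖² − ⟨ξ_k, a⟩⟨a, ξ_l⟩/‖a‖⁴ and c_{jk} := ξ_k(j)/‖a‖² − a_j⟨ξ_k, a⟩/‖a‖⁴ for 1 ≤ k, l ≤ n and 1 ≤ j ≤ p, where ⟨x, y⟩ = Σ_i x_i · conj(y_i). Let A = (A_{kl}) be an n × n complex Hermitian matrix such that the Hermitian form of A − H is positive semidefinite, i.e. Σ_{k,l} (A_{kl} − H_{kl}) w_k conj(w_l) ≥ 0 for all w ∈ ℂⁿ. Then for every matrix v = (v_{jk}) ∈ ℂ^{p×n} one has ‖a‖² · |Σ_{j=1}^p Σ_{k=1}^n c_{jk} v_{jk}|² ≤ m · Σ_{j=1}^p Σ_{k,l=1}^n A_{kl} v_{jk} conj(v_{jl}). -/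

import Mathlib

open Finset Complex Module
open scoped InnerProductSpace

/-- Any family spanning a subspace orthogonal to a nonzero vector admits an orthonormal
family of size at most `min` of the cardinality and `finrank - 1` whose span contains it. -/
lemma skoda_span_aux (E : Type*) [NormedAddCommGroup E] [InnerProductSpace ℂ E]
    [FiniteDimensional ℂ E] (n : ℕ) (C : Fin n → E) (aE : E) (haE : aE ≠ 0)
    (hperp : ∀ k, ⟪aE, C k⟫_ℂ = 0) :
    ∃ (d : ℕ) (U : Fin d → E), d ≤ n ∧ d ≤ finrank ℂ E - 1 ∧ Orthonormal ℂ U ∧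
      ∀ x ∈ Submodule.span ℂ (Set.range C), ∑ t, (⟪U t, x⟫_ℂ) • U t = x := by
  classical
  set W : Submodule ℂ E := Submodule.span ℂ (Set.range C) with hW
  set d : ℕ := finrank ℂ W with hd
  set u : OrthonormalBasis (Fin d) ℂ W := stdOrthonormalBasis ℂ W with hu
  refine ⟨d, fun t => ((u t : W) : E), ?_, ?_, ?_, ?_⟩
  · have := finrank_range_le_card (R := ℂ) C
    simpa [Set.finrank, ← hW] using this
  · have hWperp : W ≤ (ℂ ∙ aE)ᗮ := by
      rw [hW, Submodule.span_le]
      rintro x ⟨k, rfl⟩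
      rw [SetLike.mem_coe, Submodule.mem_orthogonal_singleton_iff_inner_right]
      exact hperp k
    have h1 : finrank ℂ (ℂ ∙ aE) = 1 := finrank_span_singleton haE
    have h2 : finrank ℂ (ℂ ∙ aE) + finrank ℂ ((ℂ ∙ aE)ᗮ) = finrank ℂ E :=
      Submodule.finrank_add_finrank_orthogonal _
    have h3 : d ≤ finrank ℂ ((ℂ ∙ aE)ᗮ) := Submodule.finrank_mono hWperp
    omega
  · exact u.orthonormal.comp_linearIsometry W.subtypeₗᵢ
  · intro x hx
    set w : W := ⟨x, hx⟩ with hw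
    have h1 := u.sum_repr' w
    have h2 : ∀ t, ⟪((u t : W) : E), x⟫_ℂ = ⟪u t, w⟫_ℂ := fun t => rfl
    calc ∑ t, (⟪((u t : W) : E), x⟫_ℂ) • ((u t : W) : E)
        = ((∑ t, (⟪u t, w⟫_ℂ) • u t : W) : E) := by
          rw [Submodule.coe_sum]
          exact Finset.sum_congr rfl fun t _ => by rw [h2, SetLike.val_smul]
    _ = x := by rw [h1]

/-- The trace bound: if every column of `M` is in the span of the orthonormal family `U`
of size `d`, then `|tr M|² ≤ d ‖M‖_F²`. -/
lemma skoda_core (p d : ℕ) (M : Fin p → Fin p → ℂ) (U : Fin d → EuclideanSpace ℂ (Fin p))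
    (horth : Orthonormal ℂ U)
    (hexp : ∀ j i, M i j = ∑ t, (∑ r, starRingEnd ℂ (U t r) * M r j) * U t i) :
    ‖∑ j, M j j‖ ^ 2 ≤ d * ∑ i, ∑ j, ‖M i j‖ ^ 2 := by
  classical
  set γ : Fin d → EuclideanSpace ℂ (Fin p) := fun t => WithLp.toLp 2 (fun r => ∑ j, M r j * U t j) with hγ
  set β : Fin d → ℂ := fun t => ∑ r, starRingEnd ℂ (U t r) * γ t r with hβ
  have htr : ∑ j, M j j = ∑ t, β t := by
    calc ∑ j, M j j = ∑ j, ∑ t, (∑ r, starRingEnd ℂ (U t r) * M r j) * U t j :=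
          Finset.sum_congr rfl fun j _ => hexp j j
    _ = ∑ t, ∑ j, (∑ r, starRingEnd ℂ (U t r) * M r j) * U t j := Finset.sum_comm
    _ = ∑ t, β t := by
          refine Finset.sum_congr rfl fun t _ => ?_
          simp only [hβ, hγ, Finset.sum_mul, Finset.mul_sum]
          rw [Finset.sum_comm]
          exact Finset.sum_congr rfl fun j _ => Finset.sum_congr rfl fun r _ => by ring
  have hβinner : ∀ t, β t = ⟪U t, γ t⟫_ℂ := by
    intro t; rw [PiLp.inner_apply]; simp [hβ, RCLike.inner_apply, mul_comm]
  have hβle : ∀ t, ‖β t‖ ≤ ‖γ t‖ := by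
    intro t
    rw [hβinner t]
    calc ‖⟪U t, γ t⟫_ℂ‖ ≤ ‖U t‖ * ‖γ t‖ := norm_inner_le_norm _ _
    _ = ‖γ t‖ := by rw [horth.1 t, one_mul]
  have h1 : ‖∑ t, β t‖ ≤ ∑ t, ‖β t‖ := norm_sum_le _ _
  have h2 : (∑ t, ‖β t‖) ^ 2 ≤ (d : ℝ) * ∑ t, ‖β t‖ ^ 2 := by
    simpa using sq_sum_le_card_mul_sum_sq (s := Finset.univ) (f := fun t => ‖β t‖)
  have h3 : ∀ t, ‖β t‖ ^ 2 ≤ ‖γ t‖ ^ 2 := fun t =>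
    pow_le_pow_left₀ (norm_nonneg _) (hβle t) 2
  have hbessel : ∑ t, ‖γ t‖ ^ 2 ≤ ∑ i, ∑ j, ‖M i j‖ ^ 2 := by
    have hγn : ∀ t, ‖γ t‖ ^ 2 = ∑ r, ‖γ t r‖ ^ 2 := fun t => PiLp.norm_sq_eq_of_L2 _ _
    have key : ∀ r : Fin p, ∑ t, ‖γ t r‖ ^ 2 ≤ ∑ j, ‖M r j‖ ^ 2 := by
      intro r
      set x : EuclideanSpace ℂ (Fin p) := WithLp.toLp 2 (fun j => starRingEnd ℂ (M r j)) with hx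
      have hinner : ∀ t, γ t r = ⟪x, U t⟫_ℂ := by
        intro t
        rw [PiLp.inner_apply, hγ]
        simp [hx, RCLike.inner_apply, mul_comm]
      have hb := horth.sum_inner_products_le (s := Finset.univ) x
      have hxnorm : ‖x‖ ^ 2 = ∑ j, ‖M r j‖ ^ 2 := by
        rw [PiLp.norm_sq_eq_of_L2]
        simp [hx]
      calc ∑ t, ‖γ t r‖ ^ 2 = ∑ t, ‖⟪U t, x⟫_ℂ‖ ^ 2 := by
            refine Finset.sum_congr rfl fun t _ => ?_
            rw [hinner t, norm_inner_symm]
      _ ≤ ‖x‖ ^ 2 := hb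
      _ = ∑ j, ‖M r j‖ ^ 2 := hxnorm
    calc ∑ t, ‖γ t‖ ^ 2 = ∑ r, ∑ t, ‖γ t r‖ ^ 2 := by
          simp_rw [hγn]; exact Finset.sum_comm
    _ ≤ ∑ r, ∑ j, ‖M r j‖ ^ 2 := Finset.sum_le_sum fun r _ => key r
  calc ‖∑ j, M j j‖ ^ 2 = ‖∑ t, β t‖ ^ 2 := by rw [htr]
  _ ≤ (∑ t, ‖β t‖) ^ 2 := pow_le_pow_left₀ (norm_nonneg _) h1 2
  _ ≤ (d : ℝ) * ∑ t, ‖β t‖ ^ 2 := h2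
  _ ≤ (d : ℝ) * ∑ t, ‖γ t‖ ^ 2 :=
        mul_le_mul_of_nonneg_left (Finset.sum_le_sum fun t _ => h3 t) (Nat.cast_nonneg d)
  _ ≤ (d : ℝ) * ∑ i, ∑ j, ‖M i j‖ ^ 2 :=
        mul_le_mul_of_nonneg_left hbessel (Nat.cast_nonneg d)

/-- Skoda's rank trick: if the columns `c ⬝ k` are orthogonal to `a`, then the trace of
`M = c vᵀ` satisfies `|tr M|² ≤ min n (p-1) ‖M‖_F²`. -/
lemma skoda_geom (n p : ℕ) (a : Fin p → ℂ) (ha : a ≠ 0)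
    (c : Fin p → Fin n → ℂ)
    (horthA : ∀ k, ∑ i, starRingEnd ℂ (a i) * c i k = 0)
    (v : Fin p → Fin n → ℂ) :
    ‖∑ j, ∑ k, c j k * v j k‖ ^ 2 ≤
      ((min n (p - 1) : ℕ) : ℝ) * ∑ i, ∑ j, ‖∑ k, c i k * v j k‖ ^ 2 := by
  classical
  set C : Fin n → EuclideanSpace ℂ (Fin p) := fun k => WithLp.toLp 2 (fun i => c i k : Fin p → ℂ) with hC
  set aE : EuclideanSpace ℂ (Fin p) := WithLp.toLp 2 (a : Fin p → ℂ) with haE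
  have haE0 : aE ≠ 0 := fun h => ha (congrArg WithLp.ofLp h)
  have hperp : ∀ k, ⟪aE, C k⟫_ℂ = 0 := by
    intro k
    rw [PiLp.inner_apply]
    simpa [RCLike.inner_apply, mul_comm] using horthA k
  obtain ⟨d, U, hdn, hdp, horth, hspan⟩ :=
    skoda_span_aux (EuclideanSpace ℂ (Fin p)) n C aE haE0 hperp
  rw [finrank_euclideanSpace_fin] at hdp
  set M : Fin p → Fin p → ℂ := fun i j => ∑ k, c i k * v j k with hM
  have hcol : ∀ j, WithLp.toLp 2 (fun i => M i j : Fin p → ℂ) ∈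
      Submodule.span ℂ (Set.range C) := by
    intro j
    have : WithLp.toLp 2 (fun i => M i j : Fin p → ℂ) = ∑ k, v j k • C k := by
      ext i
      rw [WithLp.ofLp_sum, Finset.sum_apply]
      simp only [Pi.smul_apply, hC, smul_eq_mul, hM]
      exact Finset.sum_congr rfl fun k _ => mul_comm _ _
    rw [this]
    exact Submodule.sum_mem _ fun k _ =>
      Submodule.smul_mem _ _ (Submodule.subset_span (Set.mem_range_self k))
  have hexp : ∀ j i, M i j = ∑ t, (∑ r, starRingEnd ℂ (U t r) * M r j) * U t i := by
    intro j i
    have h1 := hspan _ (hcol j)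
    have h2 : ∀ t, ⟪U t, WithLp.toLp 2 (fun i => M i j : Fin p → ℂ)⟫_ℂ =
        ∑ r, starRingEnd ℂ (U t r) * M r j := by
      intro t
      rw [PiLp.inner_apply]
      simp [RCLike.inner_apply, mul_comm]
    have h3 := congrFun (congrArg (fun z : EuclideanSpace ℂ (Fin p) => z.ofLp) h1) i
    simp only at h3
    rw [← h3, WithLp.ofLp_sum, Finset.sum_apply]
    refine Finset.sum_congr rfl fun t _ => ?_
    rw [h2 t]
    rfl
  have hmain := skoda_core p d M U horth hexp
  have hF : 0 ≤ ∑ i, ∑ j, ‖M i j‖ ^ 2 :=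
    Finset.sum_nonneg fun i _ => Finset.sum_nonneg fun j _ => sq_nonneg _
  calc ‖∑ j, ∑ k, c j k * v j k‖ ^ 2 = ‖∑ j, M j j‖ ^ 2 := rfl
  _ ≤ (d : ℝ) * ∑ i, ∑ j, ‖M i j‖ ^ 2 := hmain
  _ ≤ ((min n (p - 1) : ℕ) : ℝ) * ∑ i, ∑ j, ‖M i j‖ ^ 2 := by
      refine mul_le_mul_of_nonneg_right ?_ hF
      exact Nat.cast_le.2 (le_min hdn hdp)

/-- **Skoda's basic inequality, reformulated with a dominating Hermitian matrix.**
If the Hermitian matrix `A` dominates `H` (the complex Hessian of `log|g|²` in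
coordinate form), then
`‖a‖² |∑_{j,k} c j k * v j k|² ≤ m ∑_{j,k,l} A k l * v j k * conj (v j l)`. -/
theorem skoda_basic_inequality_dominating_metric
    (n p : ℕ) (hn : 1 ≤ n) (hp : 1 ≤ p)
    (a : Fin p → ℂ) (ha : a ≠ 0) (ξ : Fin n → Fin p → ℂ)
    (A : Fin n → Fin n → ℂ) (hA : ∀ k l, A k l = starRingEnd ℂ (A l k)) :
    let conj : ℂ → ℂ := starRingEnd ℂ
    let ip : (Fin p → ℂ) → (Fin p → ℂ) → ℂ := fun x y => ∑ i, x i * conj (y i)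
    let q : ℂ := ip a a
    let H : Fin n → Fin n → ℂ :=
      fun k l => ip (ξ k) (ξ l) / q - ip (ξ k) a * ip a (ξ l) / q ^ 2
    let c : Fin p → Fin n → ℂ :=
      fun j k => ξ k j / q - a j * ip (ξ k) a / q ^ 2
    let m : ℕ := min n (p - 1)
    (∀ w : Fin n → ℂ, 0 ≤ (∑ k, ∑ l, (A k l - H k l) * w k * conj (w l)).re) →
      ∀ v : Fin p → Fin n → ℂ,
        q.re * ‖∑ j, ∑ k, c j k * v j k‖ ^ 2 ≤
          (m : ℝ) * (∑ j, ∑ k, ∑ l, A k l * v j k * conj (v j l)).re := by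
  intro conj ip q H c m hdom v
  have hconjdef : conj = starRingEnd ℂ := rfl
  have hipdef : ∀ x y : Fin p → ℂ, ip x y = ∑ i, x i * starRingEnd ℂ (y i) := fun _ _ => rfl
  have hqdef : q = ip a a := rfl
  have hcdef : ∀ j k, c j k = ξ k j / q - a j * ip (ξ k) a / q ^ 2 := fun _ _ => rfl
  have hHdef : ∀ k l, H k l = ip (ξ k) (ξ l) / q - ip (ξ k) a * ip a (ξ l) / q ^ 2 :=
    fun _ _ => rfl
  have hmdef : m = min n (p - 1) := rfl
  rw [hconjdef] at hdom ⊢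
  -- `q` is a positive real
  set qr : ℝ := ∑ i, Complex.normSq (a i) with hqr
  have hq : q = (qr : ℂ) := by
    rw [hqdef, hipdef, hqr]; push_cast
    exact Finset.sum_congr rfl fun i _ => (Complex.mul_conj (a i))
  have hqrpos : 0 < qr := by
    rw [hqr]
    have : ∃ i, a i ≠ 0 := by
      by_contra h; push_neg at h; exact ha (funext h)
    obtain ⟨i, hi⟩ := this
    exact Finset.sum_pos' (fun j _ => Complex.normSq_nonneg _)
      ⟨i, Finset.mem_univ i, Complex.normSq_pos.2 hi⟩
  have hq0 : q ≠ 0 := by rw [hq]; exact_mod_cast hqrpos.ne'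
  have hqre : q.re = qr := by rw [hq]; simp
  have hconjq : starRingEnd ℂ q = q := by rw [hq]; exact Complex.conj_ofReal _
  -- the vector `S` and basic identities
  set S : Fin n → ℂ := fun k => ip (ξ k) a with hS0
  have hS : ∀ k, S k = ip (ξ k) a := fun _ => rfl
  set u : ℂ := q⁻¹ with hudef
  have hu : q * u = 1 := mul_inv_cancel₀ hq0
  have hconju : starRingEnd ℂ u = u := by rw [hudef, map_inv₀, hconjq]
  have hconjS : ∀ k, ip a (ξ k) = starRingEnd ℂ (S k) := by
    intro k
    rw [hipdef, hS, hipdef, map_sum]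
    exact Finset.sum_congr rfl fun i _ => by simp [mul_comm]
  have hcu : ∀ j k, c j k = ξ k j * u - a j * S k * u ^ 2 := by
    intro j k
    rw [hcdef, ← hS, div_eq_mul_inv, div_eq_mul_inv, ← inv_pow, ← hudef, mul_assoc]
  have hHu : ∀ k l, H k l = ip (ξ k) (ξ l) * u - S k * starRingEnd ℂ (S l) * u ^ 2 := by
    intro k l
    rw [hHdef, ← hS, hconjS, div_eq_mul_inv, div_eq_mul_inv, ← inv_pow, ← hudef]
  have hconjc : ∀ j l, starRingEnd ℂ (c j l) =
      starRingEnd ℂ (ξ l j) * u - starRingEnd ℂ (a j) * starRingEnd ℂ (S l) * u ^ 2 := by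
    intro j l
    rw [hcu]
    simp only [map_sub, map_mul, map_pow, hconju]
  -- orthogonality of the columns of `c` to `a`
  have horthA : ∀ k, ∑ i, starRingEnd ℂ (a i) * c i k = 0 := by
    intro k
    have hpt : ∀ i, starRingEnd ℂ (a i) * c i k =
        (ξ k i * starRingEnd ℂ (a i)) * u - (a i * starRingEnd ℂ (a i)) * (S k * u ^ 2) := by
      intro i; rw [hcu]; ring
    rw [Finset.sum_congr rfl fun i _ => hpt i, Finset.sum_sub_distrib,
      ← Finset.sum_mul, ← Finset.sum_mul, ← hipdef, ← hipdef, ← hS, ← hqdef]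
    linear_combination (-(S k * u)) * hu
  -- `H` is `q` times the Gram matrix of the columns of `c`
  have hH : ∀ k l, H k l = q * ∑ i, c i k * starRingEnd ℂ (c i l) := by
    intro k l
    have hpt : ∀ i, c i k * starRingEnd ℂ (c i l) =
        (ξ k i * starRingEnd ℂ (ξ l i)) * u ^ 2 -
        (ξ k i * starRingEnd ℂ (a i)) * (starRingEnd ℂ (S l) * u ^ 3) -
        (a i * starRingEnd ℂ (ξ l i)) * (S k * u ^ 3) +
        (a i * starRingEnd ℂ (a i)) * (S k * starRingEnd ℂ (S l) * u ^ 4) := by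
      intro i; rw [hcu, hconjc]; ring
    have hsum : ∑ i, c i k * starRingEnd ℂ (c i l) =
        ip (ξ k) (ξ l) * u ^ 2 - S k * (starRingEnd ℂ (S l) * u ^ 3) -
        starRingEnd ℂ (S l) * (S k * u ^ 3) + q * (S k * starRingEnd ℂ (S l) * u ^ 4) := by
      rw [Finset.sum_congr rfl fun i _ => hpt i, Finset.sum_add_distrib,
        Finset.sum_sub_distrib, Finset.sum_sub_distrib,
        ← Finset.sum_mul, ← Finset.sum_mul, ← Finset.sum_mul, ← Finset.sum_mul,
        ← hipdef, ← hipdef, ← hipdef, ← hipdef, ← hS, ← hconjS l, hconjS l, ← hqdef]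
    rw [hsum, hHu]
    linear_combination (-(ip (ξ k) (ξ l)) * u + S k * starRingEnd ℂ (S l) * u ^ 2 -
      q * S k * starRingEnd ℂ (S l) * u ^ 3) * hu
  -- the matrix M and the Frobenius norm
  set M : Fin p → Fin p → ℂ := fun i j => ∑ k, c i k * v j k with hM
  set F : ℝ := ∑ i, ∑ j, ‖M i j‖ ^ 2 with hF
  have hF0 : 0 ≤ F :=
    Finset.sum_nonneg fun i _ => Finset.sum_nonneg fun j _ => sq_nonneg _
  -- the `H`-quadratic form equals `q * F`
  have hHsum : ∀ j, ∑ k, ∑ l, H k l * v j k * starRingEnd ℂ (v j l) =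
      q * ∑ i, M i j * starRingEnd ℂ (M i j) := by
    intro j
    calc ∑ k, ∑ l, H k l * v j k * starRingEnd ℂ (v j l)
        = ∑ k, ∑ l, ∑ i, q * ((c i k * v j k) *
            (starRingEnd ℂ (c i l) * starRingEnd ℂ (v j l))) := by
          refine Finset.sum_congr rfl fun k _ => Finset.sum_congr rfl fun l _ => ?_
          rw [hH k l, Finset.mul_sum, Finset.sum_mul, Finset.sum_mul]
          exact Finset.sum_congr rfl fun i _ => by ring
    _ = ∑ i, ∑ k, ∑ l, q * ((c i k * v j k) *
            (starRingEnd ℂ (c i l) * starRingEnd ℂ (v j l))) := by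
          rw [Finset.sum_congr rfl fun k _ => Finset.sum_comm]
          exact Finset.sum_comm
    _ = q * ∑ i, M i j * starRingEnd ℂ (M i j) := by
          rw [Finset.mul_sum]
          refine Finset.sum_congr rfl fun i _ => ?_
          rw [show M i j = ∑ k, c i k * v j k from rfl, map_sum, Finset.sum_mul_sum,
            Finset.mul_sum]
          refine Finset.sum_congr rfl fun k _ => ?_
          rw [Finset.mul_sum]
          exact Finset.sum_congr rfl fun l _ => by rw [map_mul]
  have hHre : (∑ j, ∑ k, ∑ l, H k l * v j k * starRingEnd ℂ (v j l)).re = qr * F := by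
    have hG : ∑ j, ∑ i, M i j * starRingEnd ℂ (M i j) = ((F : ℝ) : ℂ) := by
      calc ∑ j, ∑ i, M i j * starRingEnd ℂ (M i j)
          = ∑ j, ∑ i, ((‖M i j‖ ^ 2 : ℝ) : ℂ) := by
            refine Finset.sum_congr rfl fun j _ => Finset.sum_congr rfl fun i _ => ?_
            rw [Complex.mul_conj, Complex.sq_norm]
      _ = ((F : ℝ) : ℂ) := by rw [hF]; push_cast; exact Finset.sum_comm
    have hall : ∑ j, ∑ k, ∑ l, H k l * v j k * starRingEnd ℂ (v j l) = ((qr * F : ℝ) : ℂ) := by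
      rw [Finset.sum_congr rfl fun j _ => hHsum j, ← Finset.mul_sum, hG, hq,
        ← Complex.ofReal_mul]
    rw [hall, Complex.ofReal_re]
  -- domination by `A`
  have hdomsum : qr * F ≤ (∑ j, ∑ k, ∑ l, A k l * v j k * starRingEnd ℂ (v j l)).re := by
    rw [← hHre]
    have key : ∀ j, (∑ k, ∑ l, H k l * v j k * starRingEnd ℂ (v j l)).re ≤
        (∑ k, ∑ l, A k l * v j k * starRingEnd ℂ (v j l)).re := by
      intro j
      have h0 := hdom (v j)
      have hsplit : ∑ k, ∑ l, (A k l - H k l) * v j k * starRingEnd ℂ (v j l) =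
          (∑ k, ∑ l, A k l * v j k * starRingEnd ℂ (v j l)) -
          (∑ k, ∑ l, H k l * v j k * starRingEnd ℂ (v j l)) := by
        rw [← Finset.sum_sub_distrib]
        refine Finset.sum_congr rfl fun k _ => ?_
        rw [← Finset.sum_sub_distrib]
        exact Finset.sum_congr rfl fun l _ => by ring
      rw [hsplit, Complex.sub_re] at h0
      linarith
    rw [Complex.re_sum, Complex.re_sum]
    exact Finset.sum_le_sum fun j _ => key j
  -- the trace inequality
  have hgeo := skoda_geom n p a ha c horthA v
  -- finish
  rw [hqre]
  calc qr * ‖∑ j, ∑ k, c j k * v j k‖ ^ 2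
      ≤ qr * (((min n (p - 1) : ℕ) : ℝ) * F) :=
        mul_le_mul_of_nonneg_left hgeo hqrpos.le
  _ = ((m : ℕ) : ℝ) * (qr * F) := by rw [hmdef]; ring
  _ ≤ ((m : ℕ) : ℝ) * (∑ j, ∑ k, ∑ l, A k l * v j k * starRingEnd ℂ (v j l)).re :=
        mul_le_mul_of_nonneg_left hdomsum (Nat.cast_nonneg _)
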